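/- For the blow-up S_1 of ℙ² in one point, Peyre's constant is α(S_1) = 1/6; that is, 2 · vol{x ∈ ℝ² : B((0,1), x) ≥ 0, B((1,−1), x) ≥ 0, and 0 ≤ B((3,−1), x) ≤ 1} = 1/6, where vol is the standard Lebesgue measure on ℝ². -/

import Mathlib

open scoped BigOperators
open MeasureTheory

/-- Intersection form on `ℤ^(n+1)` with basis `H, E₁, …, E_n`:
`B(x,y) = x₀y₀ - x₁y₁ - ⋯ - x_n y_n` (written as `2x₀y₀ - ∑ᵢ xᵢyᵢ`). -/
def interZ {n : ℕ} (x y : Fin (n + 1) → ℤ) : ℤ :=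
  2 * x 0 * y 0 - ∑ i, x i * y i

/-- The real intersection form on `ℝ^(n+1)`. -/
def interR {n : ℕ} (x y : Fin (n + 1) → ℝ) : ℝ :=
  2 * x 0 * y 0 - ∑ i, x i * y i

/-- The anticanonical class `-K = (3, -1, …, -1)`. -/
def antiK (n : ℕ) : Fin (n + 1) → ℤ := fun i => if i = 0 then 3 else -1

/-- The anticanonical class as a real vector. -/
def antiKR (n : ℕ) : Fin (n + 1) → ℝ := fun i => if i = 0 then 3 else -1

/-- A `(-1)`-class: `B(E,E) = -1` and `B(-K,E) = 1`. -/
def IsMinusOneClass {n : ℕ} (E : Fin (n + 1) → ℤ) : Prop :=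
  interZ E E = -1 ∧ interZ (antiK n) E = 1

/-- The nef cone: real vectors pairing nonnegatively with every `(-1)`-class. -/
def NefCone (n : ℕ) : Set (Fin (n + 1) → ℝ) :=
  {x | ∀ E : Fin (n + 1) → ℤ, IsMinusOneClass E → 0 ≤ interR (fun i => (E i : ℝ)) x}

/-- The slice-length function for the region defining `α(S₁)`. -/
noncomputable def ggS1 : ℝ → ℝ := fun x => min 0 (1 - 3*x) - max (-x) (-(3*x))

lemma lintegral_ggS1 : ∫⁻ x : ℝ, ENNReal.ofReal (ggS1 x) = ENNReal.ofReal (1/12) := by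
  have hgc : Continuous ggS1 := by unfold ggS1; fun_prop
  have hIcc : MeasurableSet (Set.Icc (0:ℝ) (1/2)) := measurableSet_Icc
  rw [← lintegral_add_compl (fun x => ENNReal.ofReal (ggS1 x)) hIcc]
  have h2 : ∫⁻ x in (Set.Icc (0:ℝ) (1/2))ᶜ, ENNReal.ofReal (ggS1 x) = 0 := by
    rw [setLIntegral_congr_fun hIcc.compl (fun x hx => ?_), lintegral_zero]
    have hx' : x < 0 ∨ 1/2 < x := by
      rcases lt_or_ge x 0 with h | h
      · exact Or.inl h
      · right; by_contra hc; push_neg at hc; exact hx ⟨h, hc⟩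
    have : ggS1 x ≤ 0 := by
      unfold ggS1
      rcases hx' with h | h
      · have h1 : min 0 (1 - 3*x) = 0 := min_eq_left (by linarith)
        have h2 : max (-x) (-(3*x)) = -(3*x) := max_eq_right (by linarith)
        rw [h1, h2]; linarith
      · have h1 : min 0 (1 - 3*x) = 1 - 3*x := min_eq_right (by linarith)
        have h2 : max (-x) (-(3*x)) = -x := max_eq_left (by linarith)
        rw [h1, h2]; linarith
    exact ENNReal.ofReal_eq_zero.mpr this
  rw [h2, add_zero]
  have hnn : 0 ≤ᵐ[volume.restrict (Set.Icc (0:ℝ) (1/2))] ggS1 := by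
    rw [Filter.EventuallyLE, ae_restrict_iff' hIcc]
    refine ae_of_all _ fun x hx => ?_
    obtain ⟨h0, h1⟩ := hx
    unfold ggS1
    have h2 : max (-x) (-(3*x)) = -x := max_eq_left (by linarith)
    rw [h2]
    rcases le_total x (1/3) with h | h
    · have : min 0 (1 - 3*x) = 0 := min_eq_left (by linarith)
      rw [this]; simp; linarith
    · have : min 0 (1 - 3*x) = 1 - 3*x := min_eq_right (by linarith)
      rw [this]; simp; linarith
  have hint : IntegrableOn ggS1 (Set.Icc (0:ℝ) (1/2)) := hgc.integrableOn_Icc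
  rw [← ofReal_integral_eq_lintegral_ofReal hint hnn]
  congr 1
  have heq : ∫ x in Set.Icc (0:ℝ) (1/2), ggS1 x = ∫ x in (0:ℝ)..(1/2), ggS1 x := by
    rw [intervalIntegral.integral_of_le (by norm_num), ← integral_Icc_eq_integral_Ioc]
  rw [heq, ← intervalIntegral.integral_add_adjacent_intervals
    (b := (1/3 : ℝ)) (hgc.intervalIntegrable _ _) (hgc.intervalIntegrable _ _)]
  have e1 : ∫ x in (0:ℝ)..(1/3), ggS1 x = ∫ x in (0:ℝ)..(1/3), x := by
    refine intervalIntegral.integral_congr fun x hx => ?_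
    rw [Set.uIcc_of_le (by norm_num)] at hx
    obtain ⟨h0, h1⟩ := hx
    unfold ggS1
    rw [min_eq_left (by linarith), max_eq_left (by linarith)]
    ring
  have e2 : ∫ x in (1/3:ℝ)..(1/2), ggS1 x = ∫ x in (1/3:ℝ)..(1/2), (1 - 2*x) := by
    refine intervalIntegral.integral_congr fun x hx => ?_
    rw [Set.uIcc_of_le (by norm_num)] at hx
    obtain ⟨h0, h1⟩ := hx
    unfold ggS1
    rw [min_eq_right (by linarith), max_eq_left (by linarith)]
    ring
  rw [e1, e2, integral_id]
  have e3 : ∫ x in (1/3:ℝ)..(1/2), (1 - 2*x) = 1/36 := by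
    have i2 : IntervalIntegrable (fun x : ℝ => 2*x) volume (1/3) (1/2) := by
      apply Continuous.intervalIntegrable; fun_prop
    rw [intervalIntegral.integral_sub intervalIntegrable_const i2,
      intervalIntegral.integral_const_mul, integral_id, intervalIntegral.integral_const]
    norm_num
  rw [e3]
  norm_num

theorem alpha_S1 :
    2 * (volume {x : Fin (1 + 1) → ℝ |
      0 ≤ interR (n := 1) ![0, 1] x ∧ 0 ≤ interR (n := 1) ![1, -1] x ∧
      0 ≤ interR (n := 1) ![3, -1] x ∧ interR (n := 1) ![3, -1] x ≤ 1}).toReal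
      = 1 / 6 := by
  set S' : Set (ℝ × ℝ) := {p : ℝ × ℝ |
      p.2 ≤ 0 ∧ 0 ≤ p.1 + p.2 ∧ 0 ≤ 3 * p.1 + p.2 ∧ 3 * p.1 + p.2 ≤ 1} with hS'def
  have h1 : MeasurableSet {p : ℝ × ℝ | p.2 ≤ 0} :=
    measurableSet_le measurable_snd measurable_const
  have h2 : MeasurableSet {p : ℝ × ℝ | 0 ≤ p.1 + p.2} :=
    measurableSet_le measurable_const (measurable_fst.add measurable_snd)
  have h3 : MeasurableSet {p : ℝ × ℝ | 0 ≤ 3 * p.1 + p.2} :=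
    measurableSet_le measurable_const ((measurable_const.mul measurable_fst).add measurable_snd)
  have h4 : MeasurableSet {p : ℝ × ℝ | 3 * p.1 + p.2 ≤ 1} :=
    measurableSet_le ((measurable_const.mul measurable_fst).add measurable_snd) measurable_const
  have hSmeas : MeasurableSet S' := h1.inter (h2.inter (h3.inter h4))
  have hsets : {x : Fin (1 + 1) → ℝ |
      0 ≤ interR (n := 1) ![0, 1] x ∧ 0 ≤ interR (n := 1) ![1, -1] x ∧
      0 ≤ interR (n := 1) ![3, -1] x ∧ interR (n := 1) ![3, -1] x ≤ 1}
      = (MeasurableEquiv.finTwoArrow) ⁻¹' S' := by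
    ext x
    simp only [hS'def, Set.mem_setOf_eq, Set.mem_preimage, MeasurableEquiv.finTwoArrow_apply,
      interR, Fin.sum_univ_succ, Fin.sum_univ_zero, Matrix.cons_val_zero, Matrix.cons_val_one,
      Matrix.head_cons, Fin.succ_zero_eq_one]
    constructor <;> rintro ⟨h1, h2, h3, h4⟩ <;>
      exact ⟨by linarith, by linarith, by linarith, by linarith⟩
  have hvol : volume S' = ENNReal.ofReal (1/12) := by
    rw [show (volume : Measure (ℝ × ℝ)) = (volume : Measure ℝ).prod volume from rfl,
      Measure.prod_apply hSmeas]
    have hslice : ∀ x : ℝ, Prod.mk x ⁻¹' S'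
        = Set.Icc (max (-x) (-(3*x))) (min 0 (1 - 3*x)) := by
      intro x
      ext y
      simp only [hS'def, Set.mem_preimage, Set.mem_setOf_eq, Set.mem_Icc, max_le_iff, le_min_iff]
      constructor
      · rintro ⟨h1, h2, h3, h4⟩
        exact ⟨⟨by linarith, by linarith⟩, by linarith, by linarith⟩
      · rintro ⟨⟨h1, h2⟩, h3, h4⟩
        exact ⟨by linarith, by linarith, by linarith, by linarith⟩
    calc ∫⁻ x, volume (Prod.mk x ⁻¹' S')
        = ∫⁻ x, ENNReal.ofReal (ggS1 x) := by
          refine lintegral_congr fun x => ?_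
          rw [hslice x, Real.volume_Icc]
          rfl
      _ = ENNReal.ofReal (1/12) := lintegral_ggS1
  rw [hsets, (volume_preserving_finTwoArrow ℝ).measure_preimage hSmeas.nullMeasurableSet, hvol]
  rw [ENNReal.toReal_ofReal (by norm_num)]
  norm_num
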